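/- Let T : ℕ → ℕ satisfy T 0 = 1, T 1 = 1, T 2 = 2, T 3 = 4, and T (n+4) = T (n+3) + T (n+2) + T (n+1) + T n for all n. Then for all n > 3, T (2*n) = (T n)^2 + (T (n-1))^2 + (T (n-2))^2 + 2 * T (n-1) * (T (n-2) + T (n-3)). -/
import Mathlib


theorem stmt2 (T : ℕ → ℕ) (hT0 : T 0 = 1) (hT1 : T 1 = 1) (hT2 : T 2 = 2) (hT3 : T 3 = 4)
    (hTrec : ∀ n, T (n+4) = T (n+3) + T (n+2) + T (n+1) + T n) :
    ∀ n > 3, T (2*n) = (T n)^2 + (T (n-1))^2 + (T (n-2))^2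
      + 2 * T (n-1) * (T (n-2) + T (n-3)) := by
  have key : ∀ n m, T (m + n + 6) =
      T (n+3) * T (m+3) + (T (n+2) + T (n+1) + T n) * T (m+2)
        + (T (n+2) + T (n+1)) * T (m+1) + T (n+2) * T m := by
    intro n
    induction n with
    | zero =>
      intro m
      have h1 : T (m+4) = T (m+3) + T (m+2) + T (m+1) + T m := hTrec m
      have h2 : T (m+5) = T (m+4) + T (m+3) + T (m+2) + T (m+1) := hTrec (m+1)
      have h3 : T (m+6) = T (m+5) + T (m+4) + T (m+3) + T (m+2) := hTrec (m+2)
      simp only [Nat.add_zero, show (0:ℕ)+3 = 3 from rfl, show (0:ℕ)+2 = 2 from rfl,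
        show (0:ℕ)+1 = 1 from rfl, hT0, hT1, hT2, hT3]
      omega
    | succ n ih =>
      intro m
      have e : m + (n+1) + 6 = m + 1 + n + 6 := by omega
      rw [e, ih (m+1)]
      simp only [show m+1+3 = m+4 from rfl, show m+1+2 = m+3 from rfl,
        show m+1+1 = m+2 from rfl, show n+1+3 = n+4 from rfl,
        show n+1+2 = n+3 from rfl, show n+1+1 = n+2 from rfl]
      rw [hTrec m, hTrec n]
      ring
  intro n hn
  obtain ⟨k, rfl⟩ : ∃ k, n = k + 4 := ⟨n - 4, by omega⟩
  have h := key (k+1) (k+1)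
  have e : 2 * (k+4) = k + 1 + (k+1) + 6 := by ring
  rw [e, h]
  simp only [show k+4-1 = k+3 from rfl, show k+4-2 = k+2 from rfl,
    show k+4-3 = k+1 from rfl, show k+1+3 = k+4 from rfl,
    show k+1+2 = k+3 from rfl, show k+1+1 = k+2 from rfl]
  ring
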